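/- Let (Ω, F, P) be a probability space, (T_n) a sequence of positive reals with T_n → ∞, and (A_n), (B_n), (C_n) sequences of real-valued random variables on Ω such that A_n ≤ B_n + C_n almost surely for every n. Let μ₁, μ₂ : ℕ → ℝ and let μ be a Borel probability measure on ℝ such that, as n → ∞: the law of (A_n − μ₁(n))/T_n^{1/3} converges weakly to μ; the law of (B_n − μ₂(n))/T_n^{1/3} converges weakly to μ; and (C_n − (μ₁(n) − μ₂(n)))/T_n^{1/3} converges to 0 in probability. Then for every ε > 0, P(|A_n − B_n − (μ₁(n) − μ₂(n))| ≥ ε T_n^{1/3}) → 0 as n → ∞. -/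

import Mathlib

open MeasureTheory Filter
open Set
open scoped ENNReal

noncomputable def rampFun (z w : ℝ) (x : ℝ) : ℝ := max 0 (min 1 ((z + w - x) / w))

lemma rampFun_nonneg (z w x : ℝ) : 0 ≤ rampFun z w x := le_max_left _ _

lemma rampFun_le_one (z w x : ℝ) : rampFun z w x ≤ 1 :=
  max_le zero_le_one (min_le_left _ _)

lemma rampFun_of_le {z w x : ℝ} (hw : 0 < w) (h : x ≤ z) : rampFun z w x = 1 := by
  have h1 : (1:ℝ) ≤ (z + w - x) / w := (le_div_iff₀ hw).2 (by linarith)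
  rw [rampFun, min_eq_left h1, max_eq_right zero_le_one]

lemma rampFun_of_ge {z w x : ℝ} (hw : 0 < w) (h : z + w ≤ x) : rampFun z w x = 0 := by
  have h1 : (z + w - x) / w ≤ 0 := div_nonpos_of_nonpos_of_nonneg (by linarith) hw.le
  rw [rampFun, min_eq_right (h1.trans zero_le_one), max_eq_left h1]

lemma rampFun_antitone {z w : ℝ} (hw : 0 < w) {x y : ℝ} (h : x ≤ y) :
    rampFun z w y ≤ rampFun z w x := by
  have : (z + w - y) / w ≤ (z + w - x) / w := by gcongr
  exact max_le_max le_rfl (min_le_min le_rfl this)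

lemma rampFun_lipschitz {z w : ℝ} (hw : 0 < w) (x y : ℝ) :
    |rampFun z w x - rampFun z w y| ≤ |x - y| / w := by
  have h1 : |rampFun z w x - rampFun z w y|
      ≤ |min 1 ((z + w - x) / w) - min 1 ((z + w - y) / w)| := by
    rw [rampFun, rampFun, max_comm 0 _, max_comm 0 _]
    exact abs_max_sub_max_le_abs _ _ _
  have h2 : |min 1 ((z + w - x) / w) - min 1 ((z + w - y) / w)|
      ≤ max |(1:ℝ) - 1| |(z + w - x) / w - (z + w - y) / w| :=
    abs_min_sub_min_le_max _ _ _ _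
  have h3 : |(z + w - x) / w - (z + w - y) / w| = |x - y| / w := by
    rw [div_sub_div_same, abs_div, abs_of_pos hw]
    congr 1
    rw [abs_sub_comm]
    ring_nf
  calc |rampFun z w x - rampFun z w y| ≤ _ := h1
    _ ≤ _ := h2
    _ ≤ |x - y| / w := by rw [h3]; simp [max_le_iff]; positivity

noncomputable def ramp (z w : ℝ) : BoundedContinuousFunction ℝ ℝ :=
  BoundedContinuousFunction.ofNormedAddCommGroup (rampFun z w)
    (Continuous.max continuous_const (Continuous.min continuous_const
      ((continuous_const.sub continuous_id).div_const w))) 1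
    (fun x => by
      rw [Real.norm_eq_abs, abs_le]
      exact ⟨by linarith [rampFun_nonneg z w x], rampFun_le_one z w x⟩)

@[simp] lemma ramp_apply (z w x : ℝ) : ramp z w x = rampFun z w x := rfl

lemma integrable_comp_bcf {Ω : Type*} [MeasurableSpace Ω] (P : Measure Ω)
    [IsFiniteMeasure P] (f : BoundedContinuousFunction ℝ ℝ) {g : Ω → ℝ}
    (hg : Measurable g) : Integrable (fun ω => f (g ω)) P :=
  ⟨(f.continuous.measurable.comp hg).aestronglyMeasurable,
    HasFiniteIntegral.of_bounded (C := ‖f‖) (ae_of_all _ fun ω => f.norm_coe_le_norm (g ω))⟩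

lemma markov_aux {Ω : Type*} [MeasurableSpace Ω] (P : Measure Ω) [IsProbabilityMeasure P]
    {E : Set Ω} (hE : MeasurableSet E) {φ : Ω → ℝ} (hφ : Integrable φ P)
    (h : ∀ᵐ ω ∂P, E.indicator (fun _ => (1:ℝ)) ω ≤ φ ω) :
    (P E).toReal ≤ ∫ ω, φ ω ∂P := by
  have h1 : Integrable (E.indicator fun _ => (1:ℝ)) P := (integrable_const 1).indicator hE
  calc (P E).toReal = ∫ ω, E.indicator (fun _ => (1:ℝ)) ω ∂P := by
        rw [integral_indicator_const (1:ℝ) hE, smul_eq_mul, mul_one]; rfl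
    _ ≤ ∫ ω, φ ω ∂P := integral_mono_ae h1 hφ h

lemma integral_le_meas {μ : Measure ℝ} [IsProbabilityMeasure μ] {f : ℝ → ℝ}
    (hfi : Integrable f μ) {S : Set ℝ} (hS : MeasurableSet S)
    (h : ∀ x, f x ≤ S.indicator (fun _ => (1:ℝ)) x) :
    ∫ x, f x ∂μ ≤ (μ S).toReal := by
  calc ∫ x, f x ∂μ ≤ ∫ x, S.indicator (fun _ => (1:ℝ)) x ∂μ :=
        integral_mono hfi ((integrable_const 1).indicator hS) h
    _ = (μ S).toReal := by rw [integral_indicator_const (1:ℝ) hS, smul_eq_mul, mul_one]; rfl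

set_option maxHeartbeats 2000000 in
lemma core {Ω : Type*} [MeasurableSpace Ω] (P : Measure Ω) [IsProbabilityMeasure P]
    (X Y Z : ℕ → Ω → ℝ)
    (hXm : ∀ n, Measurable (X n)) (hYm : ∀ n, Measurable (Y n))
    (hZm : ∀ n, Measurable (Z n))
    (hle : ∀ n, ∀ᵐ ω ∂P, X n ω ≤ Y n ω + Z n ω)
    (μ : Measure ℝ) [IsProbabilityMeasure μ]
    (hX : ∀ f : BoundedContinuousFunction ℝ ℝ,
      Tendsto (fun n => ∫ ω, f (X n ω) ∂P) atTop (nhds (∫ x, f x ∂μ)))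
    (hY : ∀ f : BoundedContinuousFunction ℝ ℝ,
      Tendsto (fun n => ∫ ω, f (Y n ω) ∂P) atTop (nhds (∫ x, f x ∂μ)))
    (hZ : ∀ θ : ℝ, 0 < θ → Tendsto (fun n => P {ω | θ ≤ |Z n ω|}) atTop (nhds 0)) :
    ∀ ε : ℝ, 0 < ε →
      Tendsto (fun n => P {ω | ε ≤ |X n ω - Y n ω|}) atTop (nhds 0) := by
  intro ε hε
  rw [ENNReal.tendsto_atTop_zero]
  intro η hη
  obtain ⟨d, hd, hdη⟩ : ∃ d : ℝ, 0 < d ∧ ENNReal.ofReal d ≤ η := by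
    rcases eq_or_ne η ⊤ with h | h
    · exact ⟨1, one_pos, by simp [h]⟩
    · exact ⟨η.toReal, ENNReal.toReal_pos hη.ne' h, by rw [ENNReal.ofReal_toReal h]⟩
  -- tails of μ
  have hbot : Tendsto (fun r : ℝ => μ (Iic r)) atBot (nhds 0) := by
    have h0 : ⋂ r : ℝ, Iic r = (∅ : Set ℝ) := by
      apply eq_empty_iff_forall_notMem.2
      intro y hy
      have := mem_iInter.1 hy (y - 1)
      simp only [mem_Iic] at this; linarith
    have := tendsto_measure_iInter_atBot (μ := μ) (s := fun r : ℝ => Iic r)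
      (fun r => measurableSet_Iic.nullMeasurableSet) (fun i j h => Iic_subset_Iic.2 h)
      ⟨0, measure_ne_top μ _⟩
    rw [h0] at this
    simpa [Function.comp_def] using this
  have htop : Tendsto (fun r : ℝ => μ (Ici r)) atTop (nhds 0) := by
    have h0 : ⋂ r : ℝ, Ici r = (∅ : Set ℝ) := by
      apply eq_empty_iff_forall_notMem.2
      intro y hy
      have := mem_iInter.1 hy (y + 1)
      simp only [mem_Ici] at this; linarith
    have := tendsto_measure_iInter_atTop (μ := μ) (s := fun r : ℝ => Ici r)
      (fun r => measurableSet_Ici.nullMeasurableSet) (fun i j h => Ici_subset_Ici.2 h)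
      ⟨0, measure_ne_top μ _⟩
    rw [h0] at this
    simpa [Function.comp_def] using this
  have hd8 : (0:ℝ≥0∞) < ENNReal.ofReal (d/8) := ENNReal.ofReal_pos.2 (by positivity)
  obtain ⟨a', ha'⟩ := (hbot.eventually_le_const hd8).exists
  obtain ⟨b', hb'⟩ := (htop.eventually_le_const hd8).exists
  set a : ℝ := a' - 1 with ha_def
  set b : ℝ := b' + 1 with hb_def
  have hIa : (μ (Iic (a + 1))).toReal ≤ d/8 := by
    rw [show a + 1 = a' by rw [ha_def]; ring]
    exact ENNReal.toReal_le_of_le_ofReal (by positivity) ha'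
  have hIb : (μ (Ici (b - 1))).toReal ≤ d/8 := by
    rw [show b - 1 = b' by rw [hb_def]; ring]
    exact ENNReal.toReal_le_of_le_ofReal (by positivity) hb'
  -- grid
  set m : ℕ := ⌈(b - a) * 4 / ε⌉₊ + 1 with hm_def
  have hm0 : 0 < m := Nat.succ_pos _
  have hmR : (0:ℝ) < m := by exact_mod_cast hm0
  set z : ℕ → ℝ := fun j => a + j * (ε / 4) with hz
  have hzm : b ≤ z m := by
    have h1 : (b - a) * 4 / ε ≤ m := (Nat.le_ceil _).trans (by exact_mod_cast Nat.le_succ _)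
    have h2 : (b - a) * 4 ≤ m * ε := (div_le_iff₀ hε).1 h1
    simp only [hz]; nlinarith
  clear_value z
  set θ : ℝ := d * ε / (32 * m) with hθ_def
  have hθpos : 0 < θ := by positivity
  have hκ : θ / (ε / 4) = d / (8 * m) := by
    rw [hθ_def]; field_simp; ring
  -- events
  set U1 : ℕ → Set Ω := fun n => {ω | ε / 4 ≤ |Z n ω|} with hU1
  set U2 : ℕ → Set Ω := fun n => {ω | X n ω ≤ a} with hU2
  set U3 : ℕ → Set Ω := fun n => {ω | z m < X n ω} with hU3
  set D : ℕ → ℕ → Set Ω := fun n j =>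
    {ω | X n ω ≤ z (j+1)} ∩ {ω | z (j+1) + ε / 4 ≤ Y n ω + Z n ω} with hD
  have hU2m : ∀ n, MeasurableSet (U2 n) := fun n => measurableSet_le (hXm n) measurable_const
  have hU3m : ∀ n, MeasurableSet (U3 n) := fun n => measurableSet_lt measurable_const (hXm n)
  have hDm : ∀ n j, MeasurableSet (D n j) := fun n j =>
    (measurableSet_le (hXm n) measurable_const).inter
      (measurableSet_le measurable_const ((hYm n).add (hZm n)))
  -- a.e. inclusion
  have hincl : ∀ n, {ω | ε ≤ |X n ω - Y n ω|} ≤ᵐ[P]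
      ((U1 n ∪ (U2 n ∪ (U3 n ∪ ⋃ j ∈ Finset.range m, D n j))) : Set Ω) := by
    intro n
    filter_upwards [hle n] with ω hω
    intro hS
    by_cases hC1 : ε / 4 ≤ |Z n ω|
    · exact Or.inl hC1
    push_neg at hC1
    right
    have hYX : ε ≤ Y n ω - X n ω := by
      rcases le_abs.1 hS with h | h
      · exfalso
        have h1 : ε ≤ Z n ω := by linarith
        have h2 := le_abs_self (Z n ω)
        linarith
      · linarith
    have hYZ : X n ω + 3 * ε / 4 ≤ Y n ω + Z n ω := by
      have := neg_abs_le (Z n ω); linarith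
    by_cases h2 : X n ω ≤ a
    · exact Or.inl h2
    push_neg at h2
    right
    by_cases h3 : z m < X n ω
    · exact Or.inl h3
    push_neg at h3
    right
    set k : ℕ := ⌈(X n ω - a) * 4 / ε⌉₊ with hk_def
    have hpos : (0:ℝ) < (X n ω - a) * 4 / ε := by
      have : 0 < X n ω - a := by linarith
      positivity
    have hkpos : 0 < k := Nat.ceil_pos.2 hpos
    have hcast : ((k - 1 : ℕ) : ℝ) = (k : ℝ) - 1 := by
      rw [Nat.cast_sub hkpos]; simp
    have hXk : X n ω ≤ z k := by
      have h4 := Nat.le_ceil ((X n ω - a) * 4 / ε)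
      have h5 : (X n ω - a) * 4 ≤ k * ε := (div_le_iff₀ hε).1 h4
      simp only [hz]; linarith
    have hkz : z (k - 1) < X n ω := by
      have hlt : ((k:ℝ)) < (X n ω - a) * 4 / ε + 1 := Nat.ceil_lt_add_one hpos.le
      have h6 : ((k:ℝ) - 1) * ε < (X n ω - a) * 4 := by
        have := (lt_div_iff₀ hε).1 (by linarith : (k:ℝ) - 1 < (X n ω - a) * 4 / ε)
        linarith
      simp only [hz, hcast]; linarith
    have hkm : k - 1 < m := by
      by_contra hcon
      push_neg at hcon
      have hc : (m:ℝ) ≤ ((k - 1 : ℕ) : ℝ) := by exact_mod_cast hcon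
      have : z m ≤ z (k - 1) := by
        simp only [hz]; nlinarith
      linarith
    refine mem_biUnion (Finset.mem_range.2 hkm) ?_
    have hsub : k - 1 + 1 = k := Nat.succ_pred_eq_of_pos hkpos
    constructor
    · show X n ω ≤ z (k - 1 + 1)
      rw [hsub]; exact hXk
    · show z (k - 1 + 1) + ε / 4 ≤ Y n ω + Z n ω
      rw [hsub]
      have hzz : z k = z (k - 1) + ε / 4 := by
        simp only [hz, hcast]; ring
      rw [hzz]
      have h8 : z (k - 1) + ε / 4 + ε / 4 ≤ X n ω + 3 * ε / 4 := by nlinarith [hkz, hε]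
      exact h8.trans hYZ
  -- union bound
  have hsum : ∀ n, P {ω | ε ≤ |X n ω - Y n ω|} ≤
      P (U1 n) + (P (U2 n) + (P (U3 n) + ∑ j ∈ Finset.range m, P (D n j))) := by
    intro n
    refine le_trans (measure_mono_ae (hincl n)) ?_
    refine le_trans (measure_union_le _ _) ?_
    gcongr
    refine le_trans (measure_union_le _ _) ?_
    gcongr
    refine le_trans (measure_union_le _ _) ?_
    gcongr
    exact measure_biUnion_finset_le _ _
  -- eventual bounds
  have hE1 : ∀ᶠ n in atTop, P (U1 n) ≤ ENNReal.ofReal (d/8) :=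
    (hZ (ε/4) (by positivity)).eventually_le_const hd8
  -- lower tail
  have hgμ : ∫ x, (ramp a 1) x ∂μ ≤ d/8 := by
    refine le_trans (integral_le_meas (integrable_comp_bcf μ (ramp a 1) measurable_id)
      measurableSet_Iic (S := Iic (a+1)) ?_) hIa
    intro x
    simp only [id_eq]
    by_cases hx : x ∈ Iic (a+1)
    · rw [indicator_of_mem hx]; exact rampFun_le_one _ _ _
    · have hx' : a + 1 ≤ x := by
        simp only [mem_Iic, not_le] at hx; linarith
      rw [indicator_of_notMem hx, ramp_apply, rampFun_of_ge one_pos hx']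
  have hE2 : ∀ᶠ n in atTop, P (U2 n) ≤ ENNReal.ofReal (d/4) := by
    have hev : ∀ᶠ n in atTop, ∫ ω, (ramp a 1) (X n ω) ∂P ≤ d/4 :=
      (hX (ramp a 1)).eventually_le_const (lt_of_le_of_lt hgμ (by linarith))
    filter_upwards [hev] with n hn
    rw [ENNReal.le_ofReal_iff_toReal_le (measure_ne_top P _) (by positivity)]
    refine le_trans (markov_aux P (hU2m n) (integrable_comp_bcf P _ (hXm n)) ?_) hn
    refine ae_of_all _ fun ω => ?_
    by_cases hω : ω ∈ U2 n
    · have hω' : X n ω ≤ a := hω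
      rw [indicator_of_mem hω, ramp_apply, rampFun_of_le one_pos hω']
    · rw [indicator_of_notMem hω]; exact rampFun_nonneg _ _ _
  -- upper tail
  set uf : BoundedContinuousFunction ℝ ℝ :=
    BoundedContinuousFunction.const ℝ (1:ℝ) - ramp (z m - 1) 1 with huf
  have hufx : ∀ x, uf x = 1 - rampFun (z m - 1) 1 x := fun x => by
    simp [huf]
  have hufμ : ∫ x, uf x ∂μ ≤ d/8 := by
    have hmono : (μ (Ici (z m - 1))).toReal ≤ d/8 := by
      refine le_trans (ENNReal.toReal_mono (measure_ne_top μ _)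
        (measure_mono (Ici_subset_Ici.2 (by linarith)))) hIb
    refine le_trans (integral_le_meas (integrable_comp_bcf μ uf measurable_id)
      measurableSet_Ici (S := Ici (z m - 1)) ?_) hmono
    intro x
    simp only [id_eq]
    by_cases hx : x ∈ Ici (z m - 1)
    · rw [indicator_of_mem hx, hufx]
      have := rampFun_nonneg (z m - 1) 1 x; linarith
    · have hx' : x ≤ z m - 1 := by
        simp only [mem_Ici, not_le] at hx; linarith
      rw [indicator_of_notMem hx, hufx, rampFun_of_le one_pos hx']
      norm_num
  have hE3 : ∀ᶠ n in atTop, P (U3 n) ≤ ENNReal.ofReal (d/4) := by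
    have hev : ∀ᶠ n in atTop, ∫ ω, uf (X n ω) ∂P ≤ d/4 :=
      (hX uf).eventually_le_const (lt_of_le_of_lt hufμ (by linarith))
    filter_upwards [hev] with n hn
    rw [ENNReal.le_ofReal_iff_toReal_le (measure_ne_top P _) (by positivity)]
    refine le_trans (markov_aux P (hU3m n) (integrable_comp_bcf P _ (hXm n)) ?_) hn
    refine ae_of_all _ fun ω => ?_
    by_cases hω : ω ∈ U3 n
    · have hω' : z m - 1 + 1 ≤ X n ω := by
        have h5 : z m < X n ω := hω
        linarith
      rw [indicator_of_mem hω, hufx, rampFun_of_ge one_pos hω']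
      norm_num
    · rw [indicator_of_notMem hω, hufx]
      have := rampFun_le_one (z m - 1) 1 (X n ω); linarith
  -- middle terms
  have hE4 : ∀ᶠ n in atTop, ∀ j ∈ Finset.range m, P (D n j) ≤ ENNReal.ofReal (3*d/(8*m)) := by
    rw [eventually_all_finset]
    intro j hj
    set fj : BoundedContinuousFunction ℝ ℝ := ramp (z (j+1)) (ε/4) with hfj
    have hdiff : Tendsto (fun n => (∫ ω, fj (X n ω) ∂P) - ∫ ω, fj (Y n ω) ∂P)
        atTop (nhds 0) := by
      have := (hX fj).sub (hY fj); simpa using this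
    have hev1 : ∀ᶠ n in atTop, (∫ ω, fj (X n ω) ∂P) - ∫ ω, fj (Y n ω) ∂P ≤ d/(8*m) :=
      hdiff.eventually_le_const (by positivity)
    have hev2 : ∀ᶠ n in atTop, P {ω | θ ≤ |Z n ω|} ≤ ENNReal.ofReal (d/(8*m)) :=
      (hZ θ hθpos).eventually_le_const (ENNReal.ofReal_pos.2 (by positivity))
    filter_upwards [hev1, hev2] with n h1 h2
    rw [ENNReal.le_ofReal_iff_toReal_le (measure_ne_top P _) (by positivity)]
    have hw4 : (0:ℝ) < ε/4 := by positivity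
    have hYZmeas : Measurable (fun ω => Y n ω + Z n ω) := (hYm n).add (hZm n)
    have hint1 : Integrable (fun ω => fj (X n ω)) P := integrable_comp_bcf P _ (hXm n)
    have hint2 : Integrable (fun ω => fj (Y n ω + Z n ω)) P := integrable_comp_bcf P _ hYZmeas
    have hint3 : Integrable (fun ω => fj (Y n ω)) P := integrable_comp_bcf P _ (hYm n)
    have step1 : (P (D n j)).toReal
        ≤ (∫ ω, fj (X n ω) ∂P) - ∫ ω, fj (Y n ω + Z n ω) ∂P := by
      rw [← integral_sub hint1 hint2]
      refine markov_aux P (hDm n j) (hint1.sub hint2) ?_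
      filter_upwards [hle n] with ω hω
      by_cases hmem : ω ∈ D n j
      · rw [indicator_of_mem hmem]
        obtain ⟨hm1, hm2⟩ := hmem
        simp only [hfj, ramp_apply]
        rw [rampFun_of_le hw4 hm1, rampFun_of_ge hw4 hm2]
        norm_num
      · rw [indicator_of_notMem hmem]
        simp only [hfj, ramp_apply]
        have := rampFun_antitone (z := z (j+1)) hw4 hω
        linarith
    have hZset : MeasurableSet {ω | θ ≤ |Z n ω|} :=
      measurableSet_le measurable_const (hZm n).abs
    have hindint : Integrable ({ω | θ ≤ |Z n ω|}.indicator fun _ => (1:ℝ)) P :=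
      (integrable_const 1).indicator hZset
    have step2 : (∫ ω, fj (Y n ω) ∂P) - ∫ ω, fj (Y n ω + Z n ω) ∂P
        ≤ d/(8*m) + (P {ω | θ ≤ |Z n ω|}).toReal := by
      rw [← integral_sub hint3 hint2]
      have hptw : ∀ ω, fj (Y n ω) - fj (Y n ω + Z n ω)
          ≤ d/(8*m) + {ω | θ ≤ |Z n ω|}.indicator (fun _ => (1:ℝ)) ω := by
        intro ω
        by_cases hθω : ω ∈ {ω | θ ≤ |Z n ω|}
        · rw [indicator_of_mem hθω]
          simp only [hfj, ramp_apply]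
          have h01 := rampFun_nonneg (z (j+1)) (ε/4) (Y n ω + Z n ω)
          have h02 := rampFun_le_one (z (j+1)) (ε/4) (Y n ω)
          have : (0:ℝ) ≤ d/(8*m) := by positivity
          linarith
        · rw [indicator_of_notMem hθω]
          simp only [mem_setOf_eq, not_le] at hθω
          have hlip := rampFun_lipschitz (z := z (j+1)) hw4 (Y n ω) (Y n ω + Z n ω)
          have habs : |Y n ω - (Y n ω + Z n ω)| = |Z n ω| := by
            rw [show Y n ω - (Y n ω + Z n ω) = -(Z n ω) by ring, abs_neg]
          rw [habs] at hlip
          have h3 : |Z n ω| / (ε/4) ≤ θ / (ε/4) := by gcongr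
          rw [hκ] at h3
          simp only [hfj, ramp_apply]
          have h4 := le_abs_self
            (rampFun (z (j+1)) (ε/4) (Y n ω) - rampFun (z (j+1)) (ε/4) (Y n ω + Z n ω))
          linarith
      calc ∫ ω, (fj (Y n ω) - fj (Y n ω + Z n ω)) ∂P
          ≤ ∫ ω, (d/(8*m) + {ω | θ ≤ |Z n ω|}.indicator (fun _ => (1:ℝ)) ω) ∂P :=
            integral_mono (hint3.sub hint2) ((integrable_const _).add hindint) hptw
        _ = d/(8*m) + (P {ω | θ ≤ |Z n ω|}).toReal := by
            rw [integral_add (integrable_const _) hindint, integral_const,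
              integral_indicator_const (1:ℝ) hZset]
            simp [measure_univ]; rfl
    have h2' : (P {ω | θ ≤ |Z n ω|}).toReal ≤ d/(8*m) :=
      ENNReal.toReal_le_of_le_ofReal (by positivity) h2
    have hfinal : 3*d/(8*m) = d/(8*m) + (d/(8*m) + d/(8*m)) := by ring
    linarith [step1, step2, h1, h2']
  -- assemble
  have hall : ∀ᶠ n in atTop, P {ω | ε ≤ |X n ω - Y n ω|} ≤ η := by
    filter_upwards [hE1, hE2, hE3, hE4] with n h1 h2 h3 h4
    refine le_trans (hsum n) (le_trans ?_ hdη)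
    have hsum4 : ∑ j ∈ Finset.range m, P (D n j) ≤ ENNReal.ofReal (3*d/8) := by
      calc ∑ j ∈ Finset.range m, P (D n j)
          ≤ ∑ _j ∈ Finset.range m, ENNReal.ofReal (3*d/(8*m)) := Finset.sum_le_sum h4
        _ = m * ENNReal.ofReal (3*d/(8*m)) := by
            rw [Finset.sum_const, Finset.card_range, nsmul_eq_mul]
        _ = ENNReal.ofReal (m * (3*d/(8*m))) := by
            rw [← ENNReal.ofReal_natCast m, ← ENNReal.ofReal_mul (by positivity)]
        _ = ENNReal.ofReal (3*d/8) := by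
            congr 1
            have hm' : (m:ℝ) ≠ 0 := ne_of_gt hmR
            field_simp
    calc P (U1 n) + (P (U2 n) + (P (U3 n) + ∑ j ∈ Finset.range m, P (D n j)))
        ≤ ENNReal.ofReal (d/8) + (ENNReal.ofReal (d/4)
            + (ENNReal.ofReal (d/4) + ENNReal.ofReal (3*d/8))) := by
          gcongr
      _ = ENNReal.ofReal d := by
          rw [← ENNReal.ofReal_add (by positivity) (by positivity),
            ← ENNReal.ofReal_add (by positivity) (by positivity),
            ← ENNReal.ofReal_add (by positivity) (by positivity)]
          congr 1; ring
  rw [eventually_atTop] at hall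
  obtain ⟨N, hN⟩ := hall
  exact ⟨N, hN⟩


/-- Abstract slow decorrelation (Theorem 3.3 of the paper):
if `A n ≤ B n + C n` almost surely, the laws of `(A n − μ₁ n)/T n^{1/3}` and of
`(B n − μ₂ n)/T n^{1/3}` both converge weakly to the same probability measure
`μ`, and `(C n − (μ₁ n − μ₂ n))/T n^{1/3} → 0` in probability, then
`P(|A n − B n − (μ₁ n − μ₂ n)| ≥ ε T n^{1/3}) → 0` for every `ε > 0`. -/
theorem slow_decorrelation
    {Ω : Type*} [MeasurableSpace Ω] (P : Measure Ω) [IsProbabilityMeasure P]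
    (T : ℕ → ℝ) (hTpos : ∀ n, 0 < T n) (hT : Tendsto T atTop atTop)
    (A B C : ℕ → Ω → ℝ)
    (hAm : ∀ n, Measurable (A n)) (hBm : ∀ n, Measurable (B n))
    (hCm : ∀ n, Measurable (C n))
    (h_le : ∀ n, ∀ᵐ ω ∂P, A n ω ≤ B n ω + C n ω)
    (μ₁ μ₂ : ℕ → ℝ)
    (μ : Measure ℝ) [IsProbabilityMeasure μ]
    (hA : ∀ f : BoundedContinuousFunction ℝ ℝ,
      Tendsto
        (fun n => ∫ x, f x ∂(P.map (fun ω => (A n ω - μ₁ n) / (T n) ^ ((1:ℝ)/3))))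
        atTop (nhds (∫ x, f x ∂μ)))
    (hB : ∀ f : BoundedContinuousFunction ℝ ℝ,
      Tendsto
        (fun n => ∫ x, f x ∂(P.map (fun ω => (B n ω - μ₂ n) / (T n) ^ ((1:ℝ)/3))))
        atTop (nhds (∫ x, f x ∂μ)))
    (hC : ∀ ε : ℝ, 0 < ε →
      Tendsto
        (fun n => P {ω | ε ≤ |(C n ω - (μ₁ n - μ₂ n)) / (T n) ^ ((1:ℝ)/3)|})
        atTop (nhds 0)) :
    ∀ ε : ℝ, 0 < ε →
      Tendsto
        (fun n => P {ω | ε * (T n) ^ ((1:ℝ)/3) ≤ |A n ω - B n ω - (μ₁ n - μ₂ n)|})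
        atTop (nhds 0) := by
  intro ε hε
  have htpos : ∀ n, (0:ℝ) < (T n) ^ ((1:ℝ)/3) := fun n => Real.rpow_pos_of_pos (hTpos n) _
  set X : ℕ → Ω → ℝ := fun n ω => (A n ω - μ₁ n) / (T n) ^ ((1:ℝ)/3) with hX_def
  set Y : ℕ → Ω → ℝ := fun n ω => (B n ω - μ₂ n) / (T n) ^ ((1:ℝ)/3) with hY_def
  set Z : ℕ → Ω → ℝ := fun n ω => (C n ω - (μ₁ n - μ₂ n)) / (T n) ^ ((1:ℝ)/3) with hZ_def
  have hXm : ∀ n, Measurable (X n) := fun n => ((hAm n).sub measurable_const).div_const _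
  have hYm : ∀ n, Measurable (Y n) := fun n => ((hBm n).sub measurable_const).div_const _
  have hZm : ∀ n, Measurable (Z n) := fun n => ((hCm n).sub measurable_const).div_const _
  have hle : ∀ n, ∀ᵐ ω ∂P, X n ω ≤ Y n ω + Z n ω := by
    intro n
    filter_upwards [h_le n] with ω hω
    simp only [hX_def, hY_def, hZ_def]
    rw [← add_div, div_le_div_iff_of_pos_right (htpos n)]
    linarith
  have hXw : ∀ f : BoundedContinuousFunction ℝ ℝ,
      Tendsto (fun n => ∫ ω, f (X n ω) ∂P) atTop (nhds (∫ x, f x ∂μ)) := by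
    intro f
    have heq : (fun n => ∫ x, f x ∂(P.map (fun ω => (A n ω - μ₁ n) / (T n) ^ ((1:ℝ)/3))))
        = fun n => ∫ ω, f (X n ω) ∂P := funext fun n =>
      integral_map (hXm n).aemeasurable f.continuous.aestronglyMeasurable
    rw [← heq]; exact hA f
  have hYw : ∀ f : BoundedContinuousFunction ℝ ℝ,
      Tendsto (fun n => ∫ ω, f (Y n ω) ∂P) atTop (nhds (∫ x, f x ∂μ)) := by
    intro f
    have heq : (fun n => ∫ x, f x ∂(P.map (fun ω => (B n ω - μ₂ n) / (T n) ^ ((1:ℝ)/3))))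
        = fun n => ∫ ω, f (Y n ω) ∂P := funext fun n =>
      integral_map (hYm n).aemeasurable f.continuous.aestronglyMeasurable
    rw [← heq]; exact hB f
  have hZw : ∀ θ : ℝ, 0 < θ → Tendsto (fun n => P {ω | θ ≤ |Z n ω|}) atTop (nhds 0) :=
    fun θ hθ => hC θ hθ
  have hfin := core P X Y Z hXm hYm hZm hle μ hXw hYw hZw ε hε
  have hset : (fun n => P {ω | ε * (T n) ^ ((1:ℝ)/3) ≤ |A n ω - B n ω - (μ₁ n - μ₂ n)|})
      = fun n => P {ω | ε ≤ |X n ω - Y n ω|} := by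
    funext n
    congr 1
    ext ω
    simp only [mem_setOf_eq, hX_def, hY_def]
    rw [div_sub_div_same, show A n ω - μ₁ n - (B n ω - μ₂ n)
        = A n ω - B n ω - (μ₁ n - μ₂ n) by ring,
      abs_div, abs_of_pos (htpos n), le_div_iff₀ (htpos n)]
  rw [hset]
  exact hfin
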